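/- For every positive integer s, the graph PD_s contains the complete bipartite graph K_{s,s} as a minor, and consequently PD_s has treewidth at least s. -/

import Mathlib

open SimpleGraph

universe u

variable {V : Type u}

/-- `H` is a minor of `G`: branch sets that are nonempty, connected,
pairwise disjoint, with an edge of `G` between the branch sets of any
two adjacent vertices of `H`. -/
def IsMinor {W : Type*} (H : SimpleGraph W) (G : SimpleGraph V) : Prop :=
  ∃ B : W → Set V,
    (∀ w, (B w).Nonempty) ∧
    (∀ w, (G.induce (B w)).Connected) ∧
    (∀ w w' : W, w ≠ w' → Disjoint (B w) (B w')) ∧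
    (∀ w w' : W, H.Adj w w' → ∃ u ∈ B w, ∃ v ∈ B w', G.Adj u v)

/-- `TreewidthLe G w` : `G` has treewidth at most `w`, via a tree decomposition. -/
def TreewidthLe (G : SimpleGraph V) (w : ℕ) : Prop :=
  ∃ (ι : Type u) (T : SimpleGraph ι), T.IsAcyclic ∧ T.Connected ∧
    ∃ t : V → Set ι,
      (∀ v, (t v).Nonempty) ∧
      (∀ v, (T.induce (t v)).Connected) ∧
      (∀ u v : V, G.Adj u v → (t u ∩ t v).Nonempty) ∧
      (∀ x : ι, {v : V | x ∈ t v}.ncard ≤ w + 1)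

/-- The Pohoata–Davies graph `PD s`: a stable set `{x_j : j}` (the `Sum.inl`
vertices) together with `s` pairwise anticomplete `s`-vertex paths
`L_i = u^i_1 - ⋯ - u^i_s` (vertex `u^i_{k+1}` is `Sum.inr (i, k)`), where
`x_j` is adjacent exactly to `u^i_j` in each `L_i`. -/
def PD (s : ℕ) : SimpleGraph (Fin s ⊕ Fin s × Fin s) :=
  SimpleGraph.fromRel (fun a b =>
    match a, b with
    | Sum.inr (i, k), Sum.inr (i', k') => i = i' ∧ (k : ℕ) + 1 = (k' : ℕ)
    | Sum.inl j, Sum.inr (_, k) => k = j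
    | _, _ => False)

section TreeLemmas

variable {ι : Type*} {T : SimpleGraph ι}

/-- A walk inside `S` gives reachability in the induced graph. -/
lemma induce_reachable_of_walk {S : Set ι} :
    ∀ {a b : ι} (p : T.Walk a b) (_ : ∀ z ∈ p.support, z ∈ S)
      (ha : a ∈ S) (hb : b ∈ S), (T.induce S).Reachable ⟨a, ha⟩ ⟨b, hb⟩ := by
  intro a b p
  induction p with
  | nil => intro _ ha hb; exact Reachable.refl _
  | @cons u v w h p ih =>
    intro hsup ha hb
    have hv : v ∈ S := hsup v (by simp)
    have hadj : (T.induce S).Adj ⟨u, ha⟩ ⟨v, hv⟩ := by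
      simpa [comap_adj] using h
    exact hadj.reachable.trans (ih (fun z hz => hsup z (by simp [hz])) hv hb)

/-- Reachability in the induced graph gives a walk inside `S`. -/
lemma exists_walk_of_induce_reachable {S : Set ι} {x y : S}
    (h : (T.induce S).Reachable x y) :
    ∃ p : T.Walk x.val y.val, ∀ z ∈ p.support, z ∈ S := by
  obtain ⟨W⟩ := h
  refine ⟨W.map (Embedding.induce S).toHom, ?_⟩
  intro z hz
  replace hz : z ∈ W.support.map (Embedding.induce (G := T) S).toHom := by
    rw [← Walk.support_map]; exact hz
  rw [List.mem_map] at hz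
  obtain ⟨w, _, rfl⟩ := hz
  exact w.2

/-- Between two points of a connected set there is a path inside the set. -/
lemma exists_path_in {S : Set ι} (hS : (T.induce S).Connected)
    {a b : ι} (ha : a ∈ S) (hb : b ∈ S) :
    ∃ p : T.Walk a b, p.IsPath ∧ ∀ z ∈ p.support, z ∈ S := by
  classical
  obtain ⟨W, hW⟩ := exists_walk_of_induce_reachable (hS.preconnected ⟨a, ha⟩ ⟨b, hb⟩)
  exact ⟨W.toPath, W.toPath.2, fun z hz => hW z (W.support_toPath_subset hz)⟩

/-- Union of two intersecting connected sets is connected. -/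
lemma connected_union {A B : Set ι} (hA : (T.induce A).Connected)
    (hB : (T.induce B).Connected) (hAB : (A ∩ B).Nonempty) :
    (T.induce (A ∪ B)).Connected := by
  obtain ⟨z, hzA, hzB⟩ := hAB
  rw [connected_iff]
  have key : ∀ (u : ι) (hu : u ∈ A ∪ B),
      (T.induce (A ∪ B)).Reachable ⟨u, hu⟩ ⟨z, Or.inl hzA⟩ := by
    intro u hu
    rcases hu with h | h
    · obtain ⟨p, _, hp⟩ := exists_path_in hA h hzA
      exact induce_reachable_of_walk p (fun x hx => Or.inl (hp x hx)) _ _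
    · obtain ⟨p, _, hp⟩ := exists_path_in hB h hzB
      exact induce_reachable_of_walk p (fun x hx => Or.inr (hp x hx)) _ _
  refine ⟨fun u v => ?_, ⟨⟨z, Or.inl hzA⟩⟩⟩
  exact (key u.1 u.2).trans (key v.1 v.2).symm

/-- In a forest, the intersection of two connected sets is connected. -/
lemma connected_inter (hT : T.IsAcyclic) {A B : Set ι} (hA : (T.induce A).Connected)
    (hB : (T.induce B).Connected) (hAB : (A ∩ B).Nonempty) :
    (T.induce (A ∩ B)).Connected := by
  classical
  rw [connected_iff]
  refine ⟨fun u v => ?_, ⟨⟨hAB.choose, hAB.choose_spec⟩⟩⟩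
  obtain ⟨pA, hpA, hAs⟩ := exists_path_in hA u.2.1 v.2.1
  obtain ⟨pB, hpB, hBs⟩ := exists_path_in hB u.2.2 v.2.2
  have : (⟨pA, hpA⟩ : T.Path u.1 v.1) = ⟨pB, hpB⟩ :=
    isAcyclic_iff_path_unique.mp hT _ _
  have hEq : pA = pB := Subtype.mk_eq_mk.mp this
  have hBs' : ∀ z ∈ pA.support, z ∈ B := by
    intro z hz
    exact hBs z (by rw [← hEq]; exact hz)
  exact induce_reachable_of_walk pA (fun z hz => Set.mem_inter (hAs z hz) (hBs' z hz)) u.2 v.2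

/-- Median of three paths in a forest. -/
lemma median (hT : T.IsAcyclic) :
    ∀ {a b c : ι} (p : T.Walk a b), p.IsPath → ∀ (q : T.Walk b c), q.IsPath →
      ∀ (r : T.Walk a c), r.IsPath →
      ∃ m, m ∈ p.support ∧ m ∈ q.support ∧ m ∈ r.support := by
  classical
  intro a b c p
  induction p with
  | nil =>
    intro _ q _ r _
    exact ⟨_, by simp, q.start_mem_support, r.start_mem_support⟩
  | @cons u v b h p ih =>
    intro hp q hq r hr
    have hp' : p.IsPath := ((Walk.cons_isPath_iff h p).mp hp).1
    by_cases hu : u ∈ q.support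
    · exact ⟨u, by simp, hu, r.start_mem_support⟩
    by_cases hv : v ∈ r.support
    · obtain ⟨m, h1, h2, h3⟩ := ih hp' q hq (r.dropUntil v hv) (hr.dropUntil hv)
      exact ⟨m, by simp [h1], h2, r.support_dropUntil_subset hv h3⟩
    · have hr' : (Walk.cons h.symm r).IsPath := (Walk.cons_isPath_iff h.symm r).mpr ⟨hr, hv⟩
      obtain ⟨m, h1, h2, h3⟩ := ih hp' q hq (Walk.cons h.symm r) hr'
      rw [Walk.support_cons, List.mem_cons] at h3
      rcases h3 with rfl | h3
      · -- m = v, v ∈ q.support : contradiction since then u ∈ q.support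
        exfalso
        have hP : (⟨q.dropUntil m h2, hq.dropUntil h2⟩ : T.Path m c)
            = ⟨Walk.cons h.symm r, hr'⟩ := isAcyclic_iff_path_unique.mp hT _ _
        have hPE : q.dropUntil m h2 = Walk.cons h.symm r := Subtype.mk_eq_mk.mp hP
        have : u ∈ (q.dropUntil m h2).support := by
          rw [hPE]
          simp [Walk.support_cons]
        exact hu (q.support_dropUntil_subset h2 this)
      · exact ⟨m, by simp [h1], h2, h3⟩

/-- Helly property for three connected sets in a forest. -/
lemma helly3 (hT : T.IsAcyclic) {A B C : Set ι}
    (hA : (T.induce A).Connected) (hB : (T.induce B).Connected)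
    (hC : (T.induce C).Connected) (hAB : (A ∩ B).Nonempty)
    (hBC : (B ∩ C).Nonempty) (hAC : (A ∩ C).Nonempty) :
    ∃ x, x ∈ A ∧ x ∈ B ∧ x ∈ C := by
  obtain ⟨a, haA, haB⟩ := hAB
  obtain ⟨b, hbB, hbC⟩ := hBC
  obtain ⟨c, hcA, hcC⟩ := hAC
  obtain ⟨p, hp, hpB⟩ := exists_path_in hB haB hbB
  obtain ⟨q, hq, hqC⟩ := exists_path_in hC hbC hcC
  obtain ⟨r, hr, hrA⟩ := exists_path_in hA haA hcA
  obtain ⟨m, h1, h2, h3⟩ := median hT p hp q hq r hr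
  exact ⟨m, hrA m h3, hpB m h1, hqC m h2⟩

/-- Helly property for finitely many pairwise-intersecting connected sets in a forest. -/
lemma helly (hT : T.IsAcyclic) :
    ∀ (n : ℕ) (F : Fin (n + 1) → Set ι), (∀ i, (T.induce (F i)).Connected) →
      (∀ i j, (F i ∩ F j).Nonempty) → ∃ x, ∀ i, x ∈ F i := by
  intro n
  induction n with
  | zero =>
    intro F _ hpair
    obtain ⟨x, hx, _⟩ := hpair 0 0
    refine ⟨x, fun i => ?_⟩
    have hi : i = 0 := Fin.ext (Nat.lt_one_iff.mp i.isLt)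
    rw [hi]; exact hx
  | succ n ih =>
    intro F hconn hpair
    set F' : Fin (n + 1) → Set ι := fun i => F i.castSucc ∩ F (Fin.last (n + 1)) with hF'
    have hconn' : ∀ i, (T.induce (F' i)).Connected := fun i =>
      connected_inter hT (hconn _) (hconn _) (hpair _ _)
    have hpair' : ∀ i j, (F' i ∩ F' j).Nonempty := by
      intro i j
      obtain ⟨x, hx1, hx2, hx3⟩ := helly3 hT (hconn i.castSucc) (hconn j.castSucc)
        (hconn (Fin.last (n+1))) (hpair _ _) (hpair _ _) (hpair _ _)
      exact ⟨x, ⟨hx1, hx3⟩, ⟨hx2, hx3⟩⟩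
    obtain ⟨x, hx⟩ := ih F' hconn' hpair'
    refine ⟨x, fun i => ?_⟩
    rcases Fin.lastCases (motive := fun i => x ∈ F i) ((hx 0).2) (fun i => (hx i).1) i with h
    exact h

end TreeLemmas

section PDLemmas

lemma pd_adj_inl_inr {s : ℕ} (j i k : Fin s) :
    (PD s).Adj (Sum.inl j) (Sum.inr (i, k)) ↔ k = j := by
  simp [PD, fromRel_adj]

lemma pd_adj_succ {s : ℕ} (i : Fin s) {k k' : Fin s} (h : (k : ℕ) + 1 = (k' : ℕ)) :
    (PD s).Adj (Sum.inr (i, k)) (Sum.inr (i, k')) := by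
  rw [PD, fromRel_adj]
  exact ⟨by simp; omega, Or.inl ⟨rfl, h⟩⟩

lemma pd_line_reach {s : ℕ} (hs : 0 < s) (i : Fin s) :
    ∀ (m : ℕ) (hm : m < s),
      ((PD s).induce (Set.range fun k => (Sum.inr (i, k) : Fin s ⊕ Fin s × Fin s))).Reachable
        ⟨Sum.inr (i, ⟨0, hs⟩), ⟨⟨0, hs⟩, rfl⟩⟩ ⟨Sum.inr (i, ⟨m, hm⟩), ⟨⟨m, hm⟩, rfl⟩⟩ := by
  intro m
  induction m with
  | zero => intro hm; exact Reachable.refl _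
  | succ m ih =>
    intro hm
    have hm' : m < s := Nat.lt_of_succ_lt hm
    refine (ih hm').trans (Adj.reachable ?_)
    simp only [comap_adj]
    exact pd_adj_succ i rfl

end PDLemmas

/-- `PD s` contains `K_{s,s}` as a minor and hence has treewidth at least `s`. -/
theorem stmt3 (s : ℕ) (hs : 0 < s) :
    IsMinor (completeBipartiteGraph (Fin s) (Fin s)) (PD s) ∧
    ∀ w : ℕ, TreewidthLe (PD s) w → s ≤ w := by
  classical
  constructor
  · -- the minor
    refine ⟨Sum.elim (fun j => {Sum.inl j})
      (fun i => Set.range fun k => Sum.inr (i, k)), ?_, ?_, ?_, ?_⟩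
    · rintro (j | i)
      · exact ⟨Sum.inl j, rfl⟩
      · exact ⟨Sum.inr (i, ⟨0, hs⟩), ⟨⟨0, hs⟩, rfl⟩⟩
    · rintro (j | i)
      · rw [connected_iff]
        refine ⟨fun a b => ?_, ⟨⟨Sum.inl j, rfl⟩⟩⟩
        have : a = b := Subtype.ext (a.2.trans b.2.symm)
        rw [this]
      · rw [connected_iff]
        refine ⟨?_, ⟨⟨Sum.inr (i, ⟨0, hs⟩), ⟨⟨0, hs⟩, rfl⟩⟩⟩⟩
        rintro ⟨v, hv⟩ ⟨v', hv'⟩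
        obtain ⟨k, rfl⟩ := hv
        obtain ⟨k', rfl⟩ := hv'
        exact (pd_line_reach hs i k.1 k.2).symm.trans (pd_line_reach hs i k'.1 k'.2)
    · rintro (j | i) (j' | i') hne <;> rw [Set.disjoint_left] <;> intro x hx hx'
      · exact hne (congrArg Sum.inl (Sum.inl.inj (hx.symm.trans hx' : _ = _)))
      · obtain ⟨k, hk⟩ := hx'
        rw [hx] at hk
        exact absurd hk (by simp)
      · obtain ⟨k, hk⟩ := hx
        rw [hx'] at hk
        exact absurd hk (by simp)
      · obtain ⟨k, hk⟩ := hx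
        obtain ⟨k', hk'⟩ := hx'
        have := Sum.inr.inj (hk.trans hk'.symm)
        exact hne (congrArg Sum.inr (Prod.ext_iff.mp this).1)
    · rintro (j | i) (j' | i') hadj
      · simp [completeBipartiteGraph] at hadj
      · exact ⟨Sum.inl j, rfl, Sum.inr (i', j), ⟨j, rfl⟩, (pd_adj_inl_inr j i' j).mpr rfl⟩
      · exact ⟨Sum.inr (i, j'), ⟨j', rfl⟩, Sum.inl j', rfl,
          ((pd_adj_inl_inr j' i j').mpr rfl).symm⟩
      · simp [completeBipartiteGraph] at hadj
  · -- the treewidth bound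
    rintro w ⟨ι, T, hac, hTconn, t, hbne, hbconn, hadjd, hsize⟩
    -- connected unions of bags along a path
    have connPb : ∀ (i : Fin s) (m : ℕ),
        (T.induce {x | ∃ k : Fin s, (k : ℕ) ≤ m ∧ x ∈ t (Sum.inr (i, k))}).Connected := by
      intro i m
      induction m with
      | zero =>
        have hEq : {x | ∃ k : Fin s, (k : ℕ) ≤ 0 ∧ x ∈ t (Sum.inr (i, k))}
            = t (Sum.inr (i, ⟨0, hs⟩)) := by
          ext x
          constructor
          · rintro ⟨k, hk, hx⟩
            have : k = ⟨0, hs⟩ := Fin.ext (Nat.le_zero.mp hk)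
            rwa [this] at hx
          · intro hx
            exact ⟨⟨0, hs⟩, le_refl 0, hx⟩
        rw [hEq]
        exact hbconn _
      | succ m ih =>
        by_cases hlt : m + 1 < s
        · have hm : m < s := Nat.lt_of_succ_lt hlt
          have hEq : {x | ∃ k : Fin s, (k : ℕ) ≤ m + 1 ∧ x ∈ t (Sum.inr (i, k))}
              = {x | ∃ k : Fin s, (k : ℕ) ≤ m ∧ x ∈ t (Sum.inr (i, k))}
                ∪ t (Sum.inr (i, ⟨m + 1, hlt⟩)) := by
            ext x
            constructor
            · rintro ⟨k, hk, hx⟩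
              rcases Nat.lt_or_ge (k : ℕ) (m + 1) with h | h
              · exact Or.inl ⟨k, Nat.lt_succ_iff.mp h, hx⟩
              · have : k = ⟨m + 1, hlt⟩ := Fin.ext (le_antisymm hk h)
                right; rwa [this] at hx
            · rintro (⟨k, hk, hx⟩ | hx)
              · exact ⟨k, Nat.le_succ_of_le hk, hx⟩
              · exact ⟨⟨m + 1, hlt⟩, le_refl _, hx⟩
          rw [hEq]
          refine connected_union ih (hbconn _) ?_
          obtain ⟨z, hz1, hz2⟩ := hadjd _ _
            (pd_adj_succ i (k := ⟨m, hm⟩) (k' := ⟨m + 1, hlt⟩) rfl)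
          exact ⟨z, ⟨⟨m, hm⟩, le_refl _, hz1⟩, hz2⟩
        · have hEq : {x | ∃ k : Fin s, (k : ℕ) ≤ m + 1 ∧ x ∈ t (Sum.inr (i, k))}
              = {x | ∃ k : Fin s, (k : ℕ) ≤ m ∧ x ∈ t (Sum.inr (i, k))} := by
            ext x
            constructor
            · rintro ⟨k, hk, hx⟩
              exact ⟨k, by have := k.isLt; omega, hx⟩
            · rintro ⟨k, hk, hx⟩
              exact ⟨k, Nat.le_succ_of_le hk, hx⟩
          rw [hEq]
          exact ih
    set PathBags : Fin s → Set ι := fun i => {x | ∃ k : Fin s, x ∈ t (Sum.inr (i, k))}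
      with hPBdef
    have connPB : ∀ i : Fin s, (T.induce (PathBags i)).Connected := by
      intro i
      have hEq : PathBags i = {x | ∃ k : Fin s, (k : ℕ) ≤ s ∧ x ∈ t (Sum.inr (i, k))} := by
        ext x
        constructor
        · rintro ⟨k, hx⟩; exact ⟨k, le_of_lt k.isLt, hx⟩
        · rintro ⟨k, _, hx⟩; exact ⟨k, hx⟩
      rw [hEq]
      exact connPb i s
    set F : Fin (s + 1) → Set ι := fun i =>
      if h : (i : ℕ) < s then
        (if (i : ℕ) = 0 then t (Sum.inl ⟨0, hs⟩)
          else t (Sum.inl ⟨i, h⟩) ∪ PathBags ⟨i, h⟩)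
      else PathBags ⟨0, hs⟩ with hFdef
    have hFZ : ∀ (i : Fin (s + 1)), (i : ℕ) = 0 → F i = t (Sum.inl ⟨0, hs⟩) := by
      intro i h
      simp only [hFdef]
      rw [dif_pos (by omega), if_pos h]
    have hFM : ∀ (i : Fin (s + 1)) (h : (i : ℕ) < s), (i : ℕ) ≠ 0 →
        F i = t (Sum.inl ⟨i, h⟩) ∪ PathBags ⟨i, h⟩ := by
      intro i h h0
      simp only [hFdef]
      rw [dif_pos h, if_neg h0]
    have hFL : ∀ (i : Fin (s + 1)), ¬ (i : ℕ) < s → F i = PathBags ⟨0, hs⟩ := by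
      intro i h
      simp only [hFdef]
      rw [dif_neg h]
    have connF : ∀ i, (T.induce (F i)).Connected := by
      intro i
      by_cases h : (i : ℕ) < s
      · by_cases h0 : (i : ℕ) = 0
        · rw [hFZ i h0]; exact hbconn _
        · rw [hFM i h h0]
          refine connected_union (hbconn _) (connPB _) ?_
          obtain ⟨z, hz1, hz2⟩ := hadjd _ _
            ((pd_adj_inl_inr ⟨i, h⟩ ⟨i, h⟩ ⟨i, h⟩).mpr rfl)
          exact ⟨z, hz1, ⟨⟨i, h⟩, hz2⟩⟩
      · rw [hFL i h]; exact connPB _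
    have hasL : ∀ (i : Fin (s + 1)), (i : ℕ) < s → ∃ a : Fin s, t (Sum.inl a) ⊆ F i := by
      intro i h
      by_cases h0 : (i : ℕ) = 0
      · exact ⟨⟨0, hs⟩, by rw [hFZ i h0]⟩
      · exact ⟨⟨i, h⟩, by rw [hFM i h h0]; exact Set.subset_union_left⟩
    have hasR : ∀ (i : Fin (s + 1)), (i : ℕ) ≠ 0 →
        ∃ b : Fin s, ∀ k, t (Sum.inr (b, k)) ⊆ F i := by
      intro i h0
      by_cases h : (i : ℕ) < s
      · refine ⟨⟨i, h⟩, fun k x hx => ?_⟩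
        rw [hFM i h h0]
        exact Or.inr ⟨k, hx⟩
      · refine ⟨⟨0, hs⟩, fun k x hx => ?_⟩
        rw [hFL i h]
        exact ⟨k, hx⟩
    have cross : ∀ (i j : Fin (s + 1)), (i : ℕ) < s → (j : ℕ) ≠ 0 →
        (F i ∩ F j).Nonempty := by
      intro i j h hj
      obtain ⟨a, ha⟩ := hasL i h
      obtain ⟨b, hb⟩ := hasR j hj
      obtain ⟨z, hz1, hz2⟩ := hadjd (Sum.inl a) (Sum.inr (b, a))
        ((pd_adj_inl_inr a b a).mpr rfl)
      exact ⟨z, ha hz1, hb a hz2⟩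
    have hFsub : ∀ i, ∃ v, t v ⊆ F i := by
      intro i
      by_cases h : (i : ℕ) < s
      · obtain ⟨a, ha⟩ := hasL i h
        exact ⟨_, ha⟩
      · refine ⟨Sum.inr (⟨0, hs⟩, ⟨0, hs⟩), ?_⟩
        rw [hFL i h]
        exact fun x hx => ⟨_, hx⟩
    have hpairF : ∀ i j, (F i ∩ F j).Nonempty := by
      intro i j
      by_cases hij : i = j
      · subst hij
        obtain ⟨v, hv⟩ := hFsub i
        obtain ⟨z, hz⟩ := hbne v
        exact ⟨z, hv hz, hv hz⟩
      · by_cases h1 : (i : ℕ) < s ∧ (j : ℕ) ≠ 0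
        · exact cross i j h1.1 h1.2
        · have hvne : (i : ℕ) ≠ (j : ℕ) := fun hh => hij (Fin.ext hh)
          have hi := i.isLt
          have hj := j.isLt
          have h2 : (j : ℕ) < s ∧ (i : ℕ) ≠ 0 := by omega
          obtain ⟨z, hz1, hz2⟩ := cross j i h2.1 h2.2
          exact ⟨z, hz2, hz1⟩
    obtain ⟨x, hx⟩ := helly hac s F connF hpairF
    have hx0 : x ∈ t (Sum.inl ⟨0, hs⟩) := by
      have := hx 0
      rwa [hFZ 0 rfl] at this
    have hxlast : x ∈ PathBags ⟨0, hs⟩ := by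
      have := hx (Fin.last s)
      rwa [hFL (Fin.last s) (by rw [Fin.val_last]; omega)] at this
    obtain ⟨k₀, hk₀⟩ := hxlast
    have hQ : ∀ i : Fin s, ∃ v, x ∈ t v ∧
        (v = Sum.inl i ∨ ((i : ℕ) ≠ 0 ∧ ∃ k : Fin s, v = Sum.inr (i, k))) := by
      intro i
      by_cases h0 : (i : ℕ) = 0
      · have hi : i = ⟨0, hs⟩ := Fin.ext h0
        refine ⟨Sum.inl i, ?_, Or.inl rfl⟩
        rw [hi]; exact hx0
      · have hlt : ((i.castSucc : Fin (s + 1)) : ℕ) < s := by simp only [Fin.coe_castSucc]; exact i.isLt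
        have hmem := hx i.castSucc
        rw [hFM i.castSucc hlt (by simpa using h0)] at hmem
        have hieq : (⟨((i.castSucc : Fin (s + 1)) : ℕ), hlt⟩ : Fin s) = i := Fin.ext (by simp)
        rw [hieq] at hmem
        rcases hmem with h | ⟨k, hk⟩
        · exact ⟨Sum.inl i, h, Or.inl rfl⟩
        · exact ⟨Sum.inr (i, k), hk, Or.inr ⟨h0, k, rfl⟩⟩
    choose g hg using hQ
    have hginj : Function.Injective g := by
      intro i j hEq
      rcases (hg i).2 with hi | ⟨hi0, k, hk⟩ <;> rcases (hg j).2 with hj | ⟨hj0, k', hk'⟩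
      · rw [hi, hj] at hEq
        exact Sum.inl.inj hEq
      · rw [hi, hk'] at hEq
        exact absurd hEq (by simp)
      · rw [hk, hj] at hEq
        exact absurd hEq (by simp)
      · rw [hk, hk'] at hEq
        exact (Prod.ext_iff.mp (Sum.inr.inj hEq)).1
    have hnotmem : (Sum.inr (⟨0, hs⟩, k₀) : Fin s ⊕ Fin s × Fin s) ∉ Set.range g := by
      rintro ⟨i, hEq⟩
      rcases (hg i).2 with hi | ⟨hi0, k, hk⟩
      · rw [hi] at hEq
        exact absurd hEq (by simp)
      · rw [hk] at hEq
        have h2 := Sum.inr.inj hEq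
        rw [Prod.mk.injEq] at h2
        exact hi0 (by rw [h2.1])
    have hins : insert (Sum.inr (⟨0, hs⟩, k₀) : Fin s ⊕ Fin s × Fin s) (Set.range g)
        ⊆ {v | x ∈ t v} := by
      rintro v (rfl | ⟨i, rfl⟩)
      · exact hk₀
      · exact (hg i).1
    have hrcard : (Set.range g).ncard = s := by
      rw [← Set.image_univ, Set.ncard_image_of_injective _ hginj, Set.ncard_univ,
        Nat.card_eq_fintype_card, Fintype.card_fin]
    have hcount : s + 1 ≤ {v : Fin s ⊕ Fin s × Fin s | x ∈ t v}.ncard := by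
      calc s + 1
          = (insert (Sum.inr (⟨0, hs⟩, k₀) : Fin s ⊕ Fin s × Fin s) (Set.range g)).ncard := by
            rw [Set.ncard_insert_of_notMem hnotmem (Set.toFinite _), hrcard]
        _ ≤ _ := Set.ncard_le_ncard hins (Set.toFinite _)
    have := hsize x
    omega
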